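/- Let Λ, r, t_a, t_p be positive integers with t_a + r ≤ Λ and t_p ≤ C(Λ−t_a, r) − 1. Then the total number of pairs (U, {T_1,...,T_{t_p}}) where U is an r-subset of [Λ]\S for a fixed t_a-subset S, and {T_1,...,T_{t_p}} is a t_p-element family of r-subsets of [Λ]\S all distinct from U, equals C(Λ−t_a, r) · C( C(Λ−t_a, r) − 1, t_p ), and this number equals ∑_{i=0}^{r−1} C(Λ−t_a, i) · (t_p+1) · ∑_{j=0}^{r−i−1} (−1)^j C(Λ−t_a−i, j) C( C(Λ−t_a−i−j, r−i−j), t_p+1 ) where the i-th summand counts pairs whose total intersection U ∩ T_1 ∩ ... ∩ T_{t_p} has cardinality exactly i. -/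

import Mathlib

open Finset

lemma aux_card_filter_prod {α β : Type*} (A : Finset α) (B : Finset β)
    (p : α × β → Prop) [DecidablePred p] :
    ((A ×ˢ B).filter p).card = ∑ a ∈ A, (B.filter (fun b => p (a, b))).card := by
  simp only [Finset.card_filter, Finset.sum_product]

lemma aux_contain {α : Type*} [DecidableEq α] (ground J : Finset α) (hJg : J ⊆ ground)
    (r : ℕ) (hJr : J.card ≤ r) :
    ((ground.powersetCard r).filter (fun A => J ⊆ A)).card
      = (ground.card - J.card).choose (r - J.card) := by
  rw [← Finset.card_sdiff_of_subset hJg, ← Finset.card_powersetCard (r - J.card) (ground \ J)]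
  apply Finset.card_nbij (fun A => A \ J)
  · intro A hA
    simp only [mem_coe, mem_filter, mem_powersetCard] at hA
    obtain ⟨⟨hAg, hAr⟩, hJA⟩ := hA
    simp only [mem_coe, mem_powersetCard]
    exact ⟨sdiff_subset_sdiff hAg (le_refl J), by rw [card_sdiff_of_subset hJA, hAr]⟩
  · intro A hA A' hA' h
    simp only [coe_filter, Set.mem_setOf_eq, mem_powersetCard] at hA hA'
    have h2 : A \ J = A' \ J := h
    have : A \ J ∪ J = A' \ J ∪ J := by rw [h2]
    rwa [sdiff_union_of_subset hA.2, sdiff_union_of_subset hA'.2] at this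
  · intro B hB
    simp only [mem_coe, mem_powersetCard] at hB
    obtain ⟨hBg, hBc⟩ := hB
    refine ⟨B ∪ J, ?_, ?_⟩
    · simp only [coe_filter, Set.mem_setOf_eq, mem_powersetCard]
      have hdisj : Disjoint B J := disjoint_of_subset_left hBg sdiff_disjoint
      constructor
      · constructor
        · exact union_subset (hBg.trans sdiff_subset) hJg
        · rw [card_union_of_disjoint hdisj, hBc]
          omega
      · exact subset_union_right
    · have hdisj : Disjoint B J := disjoint_of_subset_left hBg sdiff_disjoint
      simp only
      rw [union_sdiff_right, sdiff_eq_self_of_disjoint hdisj]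

lemma aux_G {α : Type*} [DecidableEq α] (ground J : Finset α) (hJg : J ⊆ ground)
    (r tp : ℕ) (htp : 0 < tp) :
    (((ground.powersetCard r).filter (fun A => J ⊆ A)).card).choose (tp + 1)
      = ((ground.card - J.card).choose (r - J.card)).choose (tp + 1) := by
  rcases le_or_gt J.card r with h | h
  · rw [aux_contain ground J hJg r h]
  · have he : ((ground.powersetCard r).filter (fun A => J ⊆ A)) = ∅ := by
      rw [filter_eq_empty_iff]
      intro A hA hJA
      rw [mem_powersetCard] at hA
      have := card_le_card hJA
      omega
    rw [he, Nat.sub_eq_zero_of_le h.le, Nat.choose_zero_right]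
    simp [Nat.choose_eq_zero_of_lt (by omega : (1:ℕ) < tp + 1)]

lemma aux_allcontain {α : Type*} [DecidableEq α] (P : Finset (Finset α)) (J : Finset α) (k : ℕ) :
    (P.powersetCard k).filter (fun F => ∀ A ∈ F, J ⊆ A)
      = (P.filter (fun A => J ⊆ A)).powersetCard k := by
  ext F
  simp only [mem_filter, mem_powersetCard]
  constructor
  · rintro ⟨⟨h1, h2⟩, h3⟩
    exact ⟨fun x hx => mem_filter.2 ⟨h1 hx, h3 x hx⟩, h2⟩
  · rintro ⟨h1, h2⟩
    exact ⟨⟨fun x hx => (mem_filter.1 (h1 hx)).1, h2⟩, fun A hA => (mem_filter.1 (h1 hA)).2⟩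

lemma aux_mobius {α β : Type*} [DecidableEq α] [DecidableEq β] (ground I : Finset α)
    (𝒜 : Finset β) (w : β → Finset α) (hw : ∀ F ∈ 𝒜, w F ⊆ ground) :
    ((𝒜.filter (fun F => w F = I)).card : ℤ)
      = ∑ K ∈ (ground \ I).powerset,
          (-1 : ℤ) ^ K.card * ((𝒜.filter (fun F => I ∪ K ⊆ w F)).card : ℤ) := by
  have hrhs : ∀ K, ((𝒜.filter (fun F => I ∪ K ⊆ w F)).card : ℤ)
      = ∑ F ∈ 𝒜, (if I ∪ K ⊆ w F then (1:ℤ) else 0) := by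
    intro K
    rw [Finset.card_filter]
    push_cast
    rfl
  simp only [hrhs, Finset.mul_sum]
  rw [Finset.sum_comm]
  rw [Finset.card_filter]
  push_cast
  apply Finset.sum_congr rfl
  intro F hF
  by_cases hIF : I ⊆ w F
  · have hfil : (ground \ I).powerset.filter (fun K => I ∪ K ⊆ w F) = (w F \ I).powerset := by
      ext K
      simp only [mem_filter, mem_powerset, union_subset_iff, subset_sdiff]
      constructor
      · rintro ⟨⟨h1, h2⟩, _, h4⟩
        exact ⟨h4, h2⟩
      · rintro ⟨h1, h2⟩
        exact ⟨⟨h1.trans ((hw F hF).trans le_rfl) |>.trans le_rfl, h2⟩, hIF, h1⟩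
    calc (if w F = I then (1:ℤ) else 0)
        = ∑ K ∈ (w F \ I).powerset, (-1:ℤ)^K.card := by
          rw [Finset.sum_powerset_neg_one_pow_card]
          congr 1
          simp only [eq_iff_iff, sdiff_eq_empty_iff_subset]
          exact ⟨fun h => h ▸ le_rfl, fun h => le_antisymm h hIF⟩
      _ = ∑ K ∈ (ground \ I).powerset, (-1:ℤ)^K.card * (if I ∪ K ⊆ w F then 1 else 0) := by
          rw [← hfil, Finset.sum_filter]
          apply Finset.sum_congr rfl
          intro K _
          by_cases h : I ∪ K ⊆ w F <;> simp [h]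
  · have h0 : (if w F = I then (1:ℤ) else 0) = 0 := by
      simp only [ite_eq_right_iff]
      intro h; exact absurd (h ▸ le_rfl) hIF
    rw [h0]
    symm
    apply Finset.sum_eq_zero
    intro K _
    have : ¬ (I ∪ K ⊆ w F) := fun h => hIF (subset_union_left.trans h)
    simp [this]

lemma aux_fI {α : Type*} [DecidableEq α] (ground I : Finset α) (hI : I ⊆ ground)
    (r tp : ℕ) (htp : 0 < tp) (hrn : r ≤ ground.card) :
    (((((ground.powersetCard r)).powersetCard (tp+1)).filter
        (fun F => ground.filter (fun x => ∀ A ∈ F, x ∈ A) = I)).card : ℤ)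
      = ∑ j ∈ Finset.range (r - I.card), (-1:ℤ)^j * ((ground.card - I.card).choose j : ℤ) *
          (((ground.card - I.card - j).choose (r - I.card - j)).choose (tp+1) : ℤ) := by
  have hIn : I.card ≤ ground.card := card_le_card hI
  rw [aux_mobius ground I ((ground.powersetCard r).powersetCard (tp+1))
      (fun F => ground.filter (fun x => ∀ A ∈ F, x ∈ A)) (fun F _ => filter_subset _ _)]
  have hterm : ∀ K ∈ (ground \ I).powerset,
      (-1:ℤ)^K.card * ((((ground.powersetCard r).powersetCard (tp+1)).filter
          (fun F => I ∪ K ⊆ ground.filter (fun x => ∀ A ∈ F, x ∈ A))).card : ℤ)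
      = (-1:ℤ)^K.card *
        (((ground.card - (I.card + K.card)).choose (r - (I.card + K.card))).choose (tp+1) : ℤ) := by
    intro K hK
    rw [mem_powerset] at hK
    have hJg : I ∪ K ⊆ ground := union_subset hI (hK.trans sdiff_subset)
    have hdisj : Disjoint I K := (disjoint_of_subset_left hK sdiff_disjoint).symm
    congr 2
    have heq : ((ground.powersetCard r).powersetCard (tp+1)).filter
        (fun F => I ∪ K ⊆ ground.filter (fun x => ∀ A ∈ F, x ∈ A))
      = ((ground.powersetCard r).powersetCard (tp+1)).filter (fun F => ∀ A ∈ F, I ∪ K ⊆ A) := by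
      apply filter_congr
      intro F _
      constructor
      · intro h A hA x hx
        exact (mem_filter.1 (h hx)).2 A hA
      · intro h x hx
        exact mem_filter.2 ⟨hJg hx, fun A hA => h A hA hx⟩
    rw [heq, aux_allcontain, card_powersetCard, aux_G ground (I ∪ K) hJg r tp htp,
        card_union_of_disjoint hdisj]
  rw [Finset.sum_congr rfl hterm, Finset.sum_powerset]
  have hcard : (ground \ I).card = ground.card - I.card := card_sdiff_of_subset hI
  rw [hcard]
  have hinner : ∀ j ∈ Finset.range (ground.card - I.card + 1),
      (∑ K ∈ (ground \ I).powersetCard j, (-1:ℤ)^K.card *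
        (((ground.card - (I.card + K.card)).choose (r - (I.card + K.card))).choose (tp+1) : ℤ))
      = (-1:ℤ)^j * ((ground.card - I.card).choose j : ℤ) *
          (((ground.card - I.card - j).choose (r - I.card - j)).choose (tp+1) : ℤ) := by
    intro j _
    have hK : ∀ K ∈ (ground \ I).powersetCard j, (-1:ℤ)^K.card *
        (((ground.card - (I.card + K.card)).choose (r - (I.card + K.card))).choose (tp+1) : ℤ)
        = (-1:ℤ)^j *
          (((ground.card - I.card - j).choose (r - I.card - j)).choose (tp+1) : ℤ) := by
      intro K hK
      have hKc : K.card = j := (mem_powersetCard.1 hK).2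
      rw [hKc, Nat.sub_add_eq, Nat.sub_add_eq]
    rw [Finset.sum_congr rfl hK, Finset.sum_const, card_powersetCard, hcard, nsmul_eq_mul]
    ring
  rw [Finset.sum_congr rfl hinner]
  symm
  apply Finset.sum_subset
  · intro j hj
    simp only [mem_range] at *
    omega
  · intro j hj hj2
    simp only [mem_range] at hj hj2
    have h1 : r - I.card - j = 0 := by omega
    rw [h1, Nat.choose_zero_right, Nat.choose_eq_zero_of_lt (by omega : (1:ℕ) < tp + 1)]
    ring

/-- Decomposition of the set of demanded mini-subfiles by intersection cardinality. -/
theorem stmt_8 (Λ r t_a t_p : ℕ) (hΛ : 0 < Λ) (hr : 0 < r) (hta : 0 < t_a)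
    (htp : 0 < t_p) (hsum : t_a + r ≤ Λ) (htp' : t_p ≤ (Λ - t_a).choose r - 1)
    (S : Finset ℕ) (hS : S ⊆ Finset.Icc 1 Λ) (hScard : S.card = t_a)
    (ground : Finset ℕ) (hground : ground = Finset.Icc 1 Λ \ S)
    (pairs : Finset (Finset ℕ × Finset (Finset ℕ)))
    (hpairs : pairs = ((ground.powersetCard r) ×ˢ
      ((ground.powersetCard r).powersetCard t_p)).filter (fun p => p.1 ∉ p.2)) :
    pairs.card = (Λ - t_a).choose r * ((Λ - t_a).choose r - 1).choose t_p ∧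
    (pairs.card : ℤ) = ∑ i ∈ Finset.range r, ((Λ - t_a).choose i : ℤ) * (t_p + 1) *
        ∑ j ∈ Finset.range (r - i), (-1 : ℤ) ^ j * ((Λ - t_a - i).choose j : ℤ) *
          ((((Λ - t_a - i - j).choose (r - i - j)).choose (t_p + 1)) : ℤ) ∧
    ∀ i < r, (((pairs.filter (fun p =>
        (ground.filter (fun x => x ∈ p.1 ∧ ∀ A ∈ p.2, x ∈ A)).card = i)).card : ℤ) =
      ((Λ - t_a).choose i : ℤ) * (t_p + 1) *
        ∑ j ∈ Finset.range (r - i), (-1 : ℤ) ^ j * ((Λ - t_a - i).choose j : ℤ) *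
          ((((Λ - t_a - i - j).choose (r - i - j)).choose (t_p + 1)) : ℤ)) := by
  have hgc : ground.card = Λ - t_a := by
    rw [hground, card_sdiff_of_subset hS, Nat.card_Icc, hScard]
    omega
  have hrn : r ≤ ground.card := by omega
  set n := Λ - t_a with hn
  have hmem : ∀ p ∈ pairs, p.1 ∈ ground.powersetCard r ∧ p.2 ⊆ ground.powersetCard r ∧
      p.2.card = t_p ∧ p.1 ∉ p.2 := by
    intro p hp
    rw [hpairs, mem_filter, mem_product] at hp
    exact ⟨hp.1.1, (mem_powersetCard.1 hp.1.2).1, (mem_powersetCard.1 hp.1.2).2, hp.2⟩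
  -- Part 3
  have key3 : ∀ i < r, (((pairs.filter (fun p =>
        (ground.filter (fun x => x ∈ p.1 ∧ ∀ A ∈ p.2, x ∈ A)).card = i)).card : ℤ) =
      (n.choose i : ℤ) * (t_p + 1) *
        ∑ j ∈ Finset.range (r - i), (-1 : ℤ) ^ j * ((n - i).choose j : ℤ) *
          ((((n - i - j).choose (r - i - j)).choose (t_p + 1)) : ℤ)) := by
    intro i hi
    set Ei := pairs.filter (fun p =>
        (ground.filter (fun x => x ∈ p.1 ∧ ∀ A ∈ p.2, x ∈ A)).card = i) with hEi
    set 𝒜 := ((ground.powersetCard r).powersetCard (t_p+1)).filter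
        (fun F => (ground.filter (fun x => ∀ A ∈ F, x ∈ A)).card = i) with h𝒜
    -- Step A : map (U, B) ↦ insert U B
    have hinsert : ∀ p ∈ Ei, insert p.1 p.2 ∈ 𝒜 := by
      intro p hp
      rw [hEi, mem_filter] at hp
      obtain ⟨hp1, hp2⟩ := hp
      obtain ⟨hU, hsub, hcard, hnot⟩ := hmem p hp1
      rw [h𝒜, mem_filter, mem_powersetCard]
      refine ⟨⟨insert_subset hU hsub, by rw [card_insert_of_notMem hnot, hcard]⟩, ?_⟩
      have heq : ground.filter (fun x => ∀ A ∈ insert p.1 p.2, x ∈ A)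
          = ground.filter (fun x => x ∈ p.1 ∧ ∀ A ∈ p.2, x ∈ A) := by
        apply filter_congr; intro x _; simp [Finset.forall_mem_insert]
      rw [heq]; exact hp2
    have hfiber : ∀ F ∈ 𝒜, (Ei.filter (fun p => insert p.1 p.2 = F)).card = t_p + 1 := by
      intro F hF
      rw [h𝒜, mem_filter, mem_powersetCard] at hF
      obtain ⟨⟨hFP, hFc⟩, hFi⟩ := hF
      rw [← hFc]
      apply Finset.card_bij (fun p _ => p.1)
      · intro p hp
        rw [mem_filter] at hp
        exact hp.2 ▸ mem_insert_self p.1 p.2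
      · intro p hp q hq h
        rw [mem_filter, hEi, mem_filter] at hp hq
        obtain ⟨⟨hpp, _⟩, hpF⟩ := hp
        obtain ⟨⟨hqp, _⟩, hqF⟩ := hq
        have hp2 : p.2 = F.erase p.1 := by
          rw [← hpF, erase_insert (hmem p hpp).2.2.2]
        have hq2 : q.2 = F.erase q.1 := by
          rw [← hqF, erase_insert (hmem q hqp).2.2.2]
        exact Prod.ext h (by rw [hp2, hq2, h])
      · intro U hU
        refine ⟨(U, F.erase U), ?_, rfl⟩
        have hUP : U ∈ ground.powersetCard r := hFP hU
        have hmempairs : (U, F.erase U) ∈ pairs := by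
          rw [hpairs, mem_filter, mem_product]
          refine ⟨⟨hUP, mem_powersetCard.2 ⟨(erase_subset _ _).trans hFP, ?_⟩⟩, notMem_erase _ _⟩
          simp [card_erase_of_mem hU, hFc]
        rw [mem_filter, hEi, mem_filter]
        refine ⟨⟨hmempairs, ?_⟩, insert_erase hU⟩
        have heq : ground.filter (fun x => x ∈ (U, F.erase U).1 ∧ ∀ A ∈ (U, F.erase U).2, x ∈ A)
            = ground.filter (fun x => ∀ A ∈ F, x ∈ A) := by
          apply filter_congr; intro x _
          constructor
          · rintro ⟨hxU, hrest⟩ A hA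
            rcases eq_or_ne A U with rfl | hne
            · exact hxU
            · exact hrest A (mem_erase.2 ⟨hne, hA⟩)
          · intro h
            exact ⟨h U hU, fun A hA => h A (mem_of_mem_erase hA)⟩
        rw [heq]; exact hFi
    have hEcard : Ei.card = 𝒜.card * (t_p + 1) := by
      rw [card_eq_sum_card_fiberwise hinsert, Finset.sum_congr rfl hfiber,
        sum_const, smul_eq_mul]
    -- Step B : fiber over the exact intersection set
    have hBcard : 𝒜.card = ∑ I ∈ ground.powersetCard i,
        (((ground.powersetCard r).powersetCard (t_p+1)).filter
          (fun F => ground.filter (fun x => ∀ A ∈ F, x ∈ A) = I)).card := by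
      have hmap : ∀ F ∈ 𝒜, ground.filter (fun x => ∀ A ∈ F, x ∈ A) ∈ ground.powersetCard i := by
        intro F hF
        rw [h𝒜, mem_filter] at hF
        exact mem_powersetCard.2 ⟨filter_subset _ _, hF.2⟩
      rw [card_eq_sum_card_fiberwise hmap]
      apply Finset.sum_congr rfl
      intro I hI
      congr 1
      rw [h𝒜, filter_filter]
      apply filter_congr
      intro F _
      constructor
      · rintro ⟨_, h⟩; exact h
      · intro h
        exact ⟨by rw [h, (mem_powersetCard.1 hI).2], h⟩
    have hIcount : ∀ I ∈ ground.powersetCard i,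
        (((((ground.powersetCard r).powersetCard (t_p+1)).filter
          (fun F => ground.filter (fun x => ∀ A ∈ F, x ∈ A) = I)).card : ℤ))
        = ∑ j ∈ Finset.range (r - i), (-1:ℤ)^j * ((n - i).choose j : ℤ) *
            (((n - i - j).choose (r - i - j)).choose (t_p + 1) : ℤ) := by
      intro I hI
      rw [mem_powersetCard] at hI
      have h := aux_fI ground I hI.1 r t_p htp hrn
      rw [hI.2, hgc] at h
      exact h
    rw [hEcard, hBcard]
    push_cast
    rw [Finset.sum_congr rfl hIcount, sum_const, card_powersetCard, hgc, nsmul_eq_mul]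
    push_cast
    ring
  -- Part 1
  have part1 : pairs.card = n.choose r * (n.choose r - 1).choose t_p := by
    rw [hpairs, aux_card_filter_prod]
    have hstep : ∀ U ∈ ground.powersetCard r,
        (((ground.powersetCard r).powersetCard t_p).filter
          (fun B => (U, B).1 ∉ (U, B).2)).card = (n.choose r - 1).choose t_p := by
      intro U hU
      have hset : ((ground.powersetCard r).powersetCard t_p).filter (fun B => U ∉ B)
          = ((ground.powersetCard r).erase U).powersetCard t_p := by
        ext B
        simp only [mem_filter, mem_powersetCard, subset_erase]
        tauto
      simp only
      rw [hset, card_powersetCard, card_erase_of_mem hU, card_powersetCard, hgc]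
    rw [Finset.sum_congr rfl hstep, sum_const, card_powersetCard, hgc, smul_eq_mul]
  -- Part 2
  have hlt : ∀ p ∈ pairs,
      (ground.filter (fun x => x ∈ p.1 ∧ ∀ A ∈ p.2, x ∈ A)).card ∈ Finset.range r := by
    intro p hp
    obtain ⟨hU, hsub, hcard, hnot⟩ := hmem p hp
    rw [mem_range]
    set W := ground.filter (fun x => x ∈ p.1 ∧ ∀ A ∈ p.2, x ∈ A) with hW
    have hWsub : W ⊆ p.1 := fun x hx => (mem_filter.1 hx).2.1
    have hUr : p.1.card = r := (mem_powersetCard.1 hU).2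
    have hWle : W.card ≤ r := hUr ▸ card_le_card hWsub
    by_contra hge
    push_neg at hge
    have hWeq : W = p.1 := eq_of_subset_of_card_le hWsub (by omega)
    obtain ⟨A, hA⟩ := card_pos.1 (by omega : 0 < p.2.card)
    have hPA : p.1 ⊆ A := by
      intro x hx
      rw [← hWeq] at hx
      exact (mem_filter.1 hx).2.2 A hA
    have hAr : A.card = r := (mem_powersetCard.1 (hsub hA)).2
    have hAp : p.1 = A := eq_of_subset_of_card_le hPA (by omega)
    exact hnot (hAp ▸ hA)
  refine ⟨part1, ?_, key3⟩
  rw [card_eq_sum_card_fiberwise hlt]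
  push_cast
  exact Finset.sum_congr rfl (fun i hi => key3 i (mem_range.1 hi))
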